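/- arXiv:2106.15985 — 2 statements merged into one kernel-verified Lean document; each statement's English description precedes it below -/
import Mathlib

section
/- Let f : ℍ → ℂ be holomorphic on the complex upper half-plane, suppose f((aτ+b)/(cτ+d)) = (cτ+d)² · f(τ) for every matrix [[a,b],[c,d]] ∈ SL_2(ℤ) and every τ ∈ ℍ, and suppose f has a Fourier expansion f(τ) = Σ_{n ≥ −N} a_n e^{2πinτ} valid for all τ ∈ ℍ, for some N ∈ ℕ and coefficients a_n ∈ ℂ (so f is a nearly-holomorphic, i.e. weakly holomorphic, modular form of weight 2 and level one). Then the constant term vanishes: a_0 = 0. -/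
noncomputable section

open Matrix Complex

/-- 2×2 complex matrices. -/
abbrev Mat2 : Type := Matrix (Fin 2) (Fin 2) ℂ
/-- 4×4 complex matrices. -/
abbrev Mat4 : Type := Matrix (Fin 4) (Fin 4) ℂ

/-- The Hermitian upper half-space of degree two:
`z` such that `(z - z*)/(2i)` is positive definite. -/
def HermHalf : Set Mat2 :=
  {z | (((2 : ℂ) * Complex.I)⁻¹ • (z - z.conjTranspose)).IsHermitian ∧
    ∀ v : Fin 2 → ℂ, v ≠ 0 →
      0 < (dotProduct (star v)
        ((((2 : ℂ) * Complex.I)⁻¹ • (z - z.conjTranspose)).mulVec v)).re}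

/-- The 2×2 block of a 4×4 matrix in block position `(r, s)`. -/
def blk (M : Mat4) (r s : Fin 2) : Mat2 :=
  Matrix.of fun i j =>
    M ⟨2 * r.val + i.val, by have := r.isLt; have := i.isLt; omega⟩
      ⟨2 * s.val + j.val, by have := s.isLt; have := j.isLt; omega⟩

/-- Möbius action of a 4×4 block matrix `[[a,b],[c,d]]` on `H2`:
`z ↦ (az+b)(cz+d)⁻¹`. -/
def moeb (M : Mat4) (z : Mat2) : Mat2 :=
  (blk M 0 0 * z + blk M 0 1) * (blk M 1 0 * z + blk M 1 1)⁻¹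

/-- The matrix 𝐉 = [[0, -I₂],[I₂, 0]]. -/
def Jmat : Mat4 :=
  !![0, 0, -1, 0; 0, 0, 0, -1; 1, 0, 0, 0; 0, 1, 0, 0]

/-- The defining relation `Mᵀ 𝐉 M̄ = 𝐉` of the unitary similitude group. -/
def IsUnitaryRel (M : Mat4) : Prop :=
  Mᵀ * Jmat * M.map (starRingEnd ℂ) = Jmat

/-- The involution σ swapping the diagonal entries τ and w. -/
def swapM (z : Mat2) : Mat2 :=
  !![z 1 1, z 0 1; z 1 0, z 0 0]

/-- Holomorphy of a function of a 2×2 complex matrix variable on a set `U`. -/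
def HoloOn (f : Mat2 → ℂ) (U : Set Mat2) : Prop :=
  DifferentiableOn ℂ (fun x : Fin 2 → Fin 2 → ℂ => f (Matrix.of x))
    ((fun x : Fin 2 → Fin 2 → ℂ => Matrix.of x) ⁻¹' U)

/-- Membership in the ring of integers `O_K` of a subfield `K ⊆ ℂ`. -/
def InOK (K : IntermediateField ℚ ℂ) (x : ℂ) : Prop :=
  x ∈ K ∧ IsIntegral ℤ x

/-- The group `SU_{2,2}(O_K)`: entries in `O_K`, determinant 1, `Mᵀ 𝐉 M̄ = 𝐉`. -/
def SU22 (K : IntermediateField ℚ ℂ) : Set Mat4 :=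
  {M | (∀ i j, InOK K (M i j)) ∧ M.det = 1 ∧ IsUnitaryRel M}

/-- The Siegel upper half-space of degree two: symmetric matrices in `H2`. -/
def Siegel : Set Mat2 := {z | z ∈ HermHalf ∧ zᵀ = z}

/-- The union of all `Γ`-translates of the Siegel upper half-space. -/
def SiegelOrbit (Γ : Set Mat4) : Set Mat2 :=
  {w | ∃ γ ∈ Γ, ∃ z ∈ Siegel, w = moeb γ z}

/-- Conditions (i) (local quotient of holomorphic functions with poles only on `H`)
and (ii) (weight `k` transformation under `Γ`) for a meromorphic modular form
regarded as a function on `H2 ∖ H`. -/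
def FormCore (Γ : Set Mat4) (H : Set Mat2) (k : ℤ) (f : Mat2 → ℂ) : Prop :=
  (∀ z ∈ HermHalf, ∃ U : Set Mat2, IsOpen U ∧ z ∈ U ∧ U ⊆ HermHalf ∧
    ∃ g h : Mat2 → ℂ, HoloOn g U ∧ HoloOn h U ∧
      (∀ w ∈ U \ H, h w ≠ 0) ∧ (∀ w ∈ U \ H, f w = g w / h w)) ∧
  (∀ γ ∈ Γ, ∀ z ∈ HermHalf \ H,
    f (moeb γ z) = (blk γ 1 0 * z + blk γ 1 1).det ^ k * f z)

/-- A symmetric meromorphic Hermitian modular form of weight `k` with poles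
supported on `H`. -/
def IsMeroFormPred (Γ : Set Mat4) (H : Set Mat2) (k : ℤ) (f : Mat2 → ℂ) : Prop :=
  FormCore Γ H k f ∧ ∀ z ∈ HermHalf \ H, f (swapM z) = f z

/-- A skew-symmetric meromorphic Hermitian modular form of weight `k` with poles
supported on `H`. -/
def IsSkewFormPred (Γ : Set Mat4) (H : Set Mat2) (k : ℤ) (f : Mat2 → ℂ) : Prop :=
  FormCore Γ H k f ∧ ∀ z ∈ HermHalf \ H, f (swapM z) = - f z

/-- `M_*^!(H)` is freely generated by forms of weights `w 0, …, w 4`. -/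
def FreelyGeneratedBy (Γ : Set Mat4) (H : Set Mat2) (w : Fin 5 → ℤ) : Prop :=
  ∃ f : Fin 5 → Mat2 → ℂ,
    (∀ i, IsMeroFormPred Γ H (w i) (f i)) ∧
    (∀ P : MvPolynomial (Fin 5) ℂ,
      (∀ z ∈ HermHalf \ H, MvPolynomial.eval (fun i => f i z) P = 0) → P = 0) ∧
    (∀ k : ℤ, ∀ g, IsMeroFormPred Γ H k g →
      ∃ P : MvPolynomial (Fin 5) ℂ,
        ∀ z ∈ HermHalf \ H, g z = MvPolynomial.eval (fun i => f i z) P)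

/-- Membership in the dual lattice `O_K^#`: `x ∈ K` such that
`Tr_{K/ℚ}(x·y) = x·y + conj(x·y) ∈ ℤ` for all `y ∈ O_K`. -/
def InOKdual (K : IntermediateField ℚ ℂ) (x : ℂ) : Prop :=
  x ∈ K ∧ ∀ y : ℂ, InOK K y → ∃ n : ℤ, x * y + (starRingEnd ℂ) (x * y) = (n : ℂ)

/-- `Λ_K`: 2×2 Hermitian matrices with entries in `O_K^#`. -/
def InLambda (K : IntermediateField ℚ ℂ) (B : Mat2) : Prop :=
  B.conjTranspose = B ∧ ∀ i j, InOKdual K (B i j)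

/-- The rational quadratic divisor `Δ_{a,B,c} = {z ∈ H2 : a·det z + tr(Bz) + c = 0}`. -/
def Delta (a c : ℤ) (B : Mat2) : Set Mat2 :=
  {z | z ∈ HermHalf ∧ (a : ℂ) * z.det + (B * z).trace + (c : ℂ) = 0}

/-- The discriminant `ac - det B` of `Δ_{a,B,c}`. -/
def discOf (a c : ℤ) (B : Mat2) : ℂ := (a : ℂ) * (c : ℂ) - B.det

/-- The union of all rational quadratic divisors with discriminant in `S`. -/
def HeegnerUnion (K : IntermediateField ℚ ℂ) (S : Set ℂ) : Set Mat2 :=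
  {z | ∃ a c : ℤ, ∃ B : Mat2, InLambda K B ∧ discOf a c B ∈ S ∧ z ∈ Delta a c B}

/-- `D(1)`: the union of all `Δ_{a,B,c}` of discriminant `1/n²`, `n ≥ 1`. -/
def Done (K : IntermediateField ℚ ℂ) : Set Mat2 :=
  HeegnerUnion K {x | ∃ n : ℕ, 0 < n ∧ x = 1 / ((n : ℂ) ^ 2)}

/-- Partial derivative of `f` with respect to the matrix entry `(i, j)`. -/
def pder (i j : Fin 2) (f : Mat2 → ℂ) (z : Mat2) : ℂ :=
  deriv (fun t : ℂ => f (z + t • Matrix.single i j (1 : ℂ))) 0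

/-- The Rankin–Cohen–Ibukiyama bracket of five functions on `H2` of weights
`k 0, …, k 4`. -/
def RCIB (k : Fin 5 → ℤ) (f : Fin 5 → Mat2 → ℂ) (z : Mat2) : ℂ :=
  (Matrix.of ![
    (fun s => (k s : ℂ) * f s z),
    (fun s => pder 0 0 (f s) z),
    (fun s => pder 0 1 (f s) z),
    (fun s => pder 1 0 (f s) z),
    (fun s => pder 1 1 (f s) z)]).det

/-- The imaginary quadratic field `ℚ(√-d) ⊆ ℂ`. -/
def Ksqrt (d : ℕ) : IntermediateField ℚ ℂ :=
  IntermediateField.adjoin ℚ {Complex.I * (Real.sqrt d : ℂ)}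

/-- Term of the primitive series. -/
def auxT (coef : ℤ → ℂ) (n : ℤ) (z : ℂ) : ℂ :=
  if n = 0 then 0 else
    coef n / (2 * (Real.pi : ℂ) * Complex.I * n) *
      Complex.exp (2 * (Real.pi : ℂ) * Complex.I * n * z)

/-- Derivative of the term. -/
def auxT' (coef : ℤ → ℂ) (n : ℤ) (z : ℂ) : ℂ :=
  if n = 0 then 0 else coef n * Complex.exp (2 * (Real.pi : ℂ) * Complex.I * n * z)

/-- The primitive. -/
def auxF (coef : ℤ → ℂ) (z : ℂ) : ℂ := coef 0 * z + ∑' n : ℤ, auxT coef n z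

lemma aux_norm (c w : ℂ) (n : ℤ) :
    ‖c * Complex.exp (2 * (Real.pi : ℂ) * Complex.I * n * w)‖
      = ‖c‖ * Real.exp (-(2 * Real.pi * n * w.im)) := by
  rw [norm_mul, Complex.norm_exp]
  congr 1
  simp [Complex.mul_re, Complex.mul_im]

lemma aux_c_ne (n : ℤ) (hn : n ≠ 0) : (2 * (Real.pi : ℂ) * Complex.I * n) ≠ 0 := by
  simp [Real.pi_ne_zero, hn]

lemma aux_one_le (n : ℤ) (hn : n ≠ 0) : (1 : ℝ) ≤ ‖(2 * (Real.pi : ℂ) * Complex.I * n)‖ := by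
  have h1 : (1 : ℝ) ≤ |(n : ℝ)| := by exact_mod_cast Int.one_le_abs hn
  simp only [norm_mul, Complex.norm_two, Complex.norm_I,
    Complex.norm_real, Real.norm_eq_abs, Complex.norm_intCast, abs_of_pos Real.pi_pos]
  nlinarith [Real.pi_gt_three]

lemma aux_exp_period (n : ℤ) (z : ℂ) :
    Complex.exp (2 * (Real.pi : ℂ) * Complex.I * n * (z + 1))
      = Complex.exp (2 * (Real.pi : ℂ) * Complex.I * n * z) := by
  rw [show 2 * (Real.pi : ℂ) * Complex.I * n * (z + 1)
      = 2 * (Real.pi : ℂ) * Complex.I * n * z + n * (2 * Real.pi * Complex.I) by ring,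
    Complex.exp_add, Complex.exp_int_mul_two_pi_mul_I, mul_one]

lemma auxF_period (coef : ℤ → ℂ) (z : ℂ) : auxF coef (z + 1) = auxF coef z + coef 0 := by
  have hT : ∀ n : ℤ, auxT coef n (z + 1) = auxT coef n z := by
    intro n
    by_cases hn : n = 0
    · simp [auxT, hn]
    · simp only [auxT, if_neg hn, aux_exp_period]
  simp only [auxF, tsum_congr hT]
  ring

lemma auxT_hasDerivAt (coef : ℤ → ℂ) (n : ℤ) (w : ℂ) :
    HasDerivAt (auxT coef n) (auxT' coef n w) w := by
  by_cases hn : n = 0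
  · have hfun : auxT coef n = fun _ : ℂ => (0 : ℂ) := funext fun y => by simp [auxT, hn]
    rw [hfun, show auxT' coef n w = 0 by simp [auxT', hn]]
    exact hasDerivAt_const w (0 : ℂ)
  · have hc := aux_c_ne n hn
    have h0 : HasDerivAt (fun y : ℂ => 2 * (Real.pi : ℂ) * Complex.I * n * y)
        (2 * (Real.pi : ℂ) * Complex.I * n) w := by
      simpa using (hasDerivAt_id w).const_mul (2 * (Real.pi : ℂ) * Complex.I * (n : ℂ))
    have h1 := h0.cexp
    have h2 := h1.const_mul (coef n / (2 * (Real.pi : ℂ) * Complex.I * n))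
    have hfun : auxT coef n = fun y : ℂ => coef n / (2 * (Real.pi : ℂ) * Complex.I * n) *
        Complex.exp (2 * (Real.pi : ℂ) * Complex.I * n * y) :=
      funext fun y => by simp [auxT, if_neg hn]
    have hval : auxT' coef n w = coef n / (2 * (Real.pi : ℂ) * Complex.I * n) *
        (Complex.exp (2 * (Real.pi : ℂ) * Complex.I * n * w) * (2 * (Real.pi : ℂ) * Complex.I * n)) := by
      rw [show auxT' coef n w = coef n * Complex.exp (2 * (Real.pi : ℂ) * Complex.I * n * w)
        from by simp [auxT', hn]]
      field_simp
    rw [hfun, hval]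
    exact h2

lemma auxF_hasDerivAt (f : ℂ → ℂ) (coef : ℤ → ℂ)
    (hsum : ∀ τ : ℂ, 0 < τ.im →
      Summable (fun n : ℤ =>
        coef n * Complex.exp (2 * (Real.pi : ℂ) * Complex.I * (n : ℂ) * τ)))
    (hexp : ∀ τ : ℂ, 0 < τ.im →
      f τ = ∑' n : ℤ, coef n * Complex.exp (2 * (Real.pi : ℂ) * Complex.I * (n : ℂ) * τ))
    (z : ℂ) (hz : 0 < z.im) : HasDerivAt (auxF coef) (f z) z := by
  set t : Set ℂ := {w : ℂ | z.im / 2 < w.im} ∩ {w : ℂ | w.im < z.im + 1} with ht_def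
  have ht : IsOpen t :=
    (isOpen_lt continuous_const Complex.continuous_im).inter
      (isOpen_lt Complex.continuous_im continuous_const)
  have htc : Convex ℝ t :=
    (convex_halfSpace_im_gt _).inter (convex_halfSpace_im_lt _)
  have hzt : z ∈ t := ⟨show z.im / 2 < z.im by linarith, show z.im < z.im + 1 by linarith⟩
  set w₁ : ℂ := Complex.I * ((z.im / 2 : ℝ) : ℂ) with hw₁
  set w₂ : ℂ := Complex.I * ((z.im + 1 : ℝ) : ℂ) with hw₂
  have hw₁im : w₁.im = z.im / 2 := by simp [hw₁]
  have hw₂im : w₂.im = z.im + 1 := by simp [hw₂]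
  have hw₁pos : 0 < w₁.im := by rw [hw₁im]; linarith
  have hw₂pos : 0 < w₂.im := by rw [hw₂im]; linarith
  set u : ℤ → ℝ := fun n =>
    ‖coef n * Complex.exp (2 * (Real.pi : ℂ) * Complex.I * n * w₁)‖ +
    ‖coef n * Complex.exp (2 * (Real.pi : ℂ) * Complex.I * n * w₂)‖ with hu_def
  have hu : Summable u :=
    (summable_norm_iff.mpr (hsum w₁ hw₁pos)).add (summable_norm_iff.mpr (hsum w₂ hw₂pos))
  have hbound : ∀ n : ℤ, ∀ w ∈ t, ‖auxT' coef n w‖ ≤ u n := by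
    intro n w hw
    by_cases hn : n = 0
    · simp only [auxT', if_pos hn, norm_zero, hu_def]
      positivity
    · simp only [auxT', if_neg hn, hu_def, aux_norm, hw₁im, hw₂im]
      rcases le_or_gt 0 (n : ℝ) with h | h
      · have : Real.exp (-(2 * Real.pi * n * w.im)) ≤ Real.exp (-(2 * Real.pi * n * (z.im / 2))) := by
          apply Real.exp_le_exp.mpr
          have h1 : z.im / 2 < w.im := hw.1
          have h2 := mul_le_mul_of_nonneg_left h1.le
            (show (0:ℝ) ≤ 2 * Real.pi * (n:ℝ) from
              mul_nonneg (mul_nonneg (by norm_num) Real.pi_pos.le) h)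
          nlinarith []
        have h2 : (0:ℝ) ≤ ‖coef n‖ * Real.exp (-(2 * Real.pi * n * (z.im + 1))) := by positivity
        nlinarith [norm_nonneg (coef n)]
      · have : Real.exp (-(2 * Real.pi * n * w.im)) ≤ Real.exp (-(2 * Real.pi * n * (z.im + 1))) := by
          apply Real.exp_le_exp.mpr
          have h1 : w.im < z.im + 1 := hw.2
          have h2 := mul_le_mul_of_nonneg_left h1.le
            (show (0:ℝ) ≤ 2 * Real.pi * (-(n:ℝ)) from
              mul_nonneg (mul_nonneg (by norm_num) Real.pi_pos.le) (by linarith))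
          nlinarith []
        have h2 : (0:ℝ) ≤ ‖coef n‖ * Real.exp (-(2 * Real.pi * n * (z.im / 2))) := by positivity
        nlinarith [norm_nonneg (coef n)]
  have hg0 : Summable (fun n : ℤ => auxT coef n z) := by
    apply Summable.of_norm_bounded (summable_norm_iff.mpr (hsum z hz))
    intro n
    by_cases hn : n = 0
    · simp only [auxT, if_pos hn, norm_zero]
      positivity
    · simp only [auxT, if_neg hn]
      rw [div_mul_eq_mul_div, norm_div]
      exact div_le_self (norm_nonneg _) (aux_one_le n hn)
  have hE : HasDerivAt (fun y => ∑' n : ℤ, auxT coef n y) (∑' n : ℤ, auxT' coef n z) z :=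
    hasDerivAt_tsum_of_isPreconnected hu ht htc.isPreconnected
      (fun n y _ => auxT_hasDerivAt coef n y) hbound hzt hg0 hzt
  have hsummand : ∀ n : ℤ, auxT' coef n z
      = coef n * Complex.exp (2 * (Real.pi : ℂ) * Complex.I * n * z)
        - (if n = 0 then coef 0 else 0) := by
    intro n
    by_cases hn : n = 0
    · subst hn; simp [auxT']
    · simp [auxT', if_neg hn]
  have htsum : (∑' n : ℤ, auxT' coef n z) = f z - coef 0 := by
    rw [tsum_congr hsummand,
      Summable.tsum_sub (hsum z hz) ((hasSum_ite_eq (0 : ℤ) (coef 0)).summable),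
      tsum_ite_eq, ← hexp z hz]
  have := ((hasDerivAt_id z).const_mul (coef 0)).add hE
  rw [htsum] at this
  have hval : coef 0 * 1 + (f z - coef 0) = f z := by ring
  rw [hval] at this
  exact this

/-- a nearly-holomorphic (weakly holomorphic) modular form of
weight 2 and level one has vanishing constant term. -/
theorem weakly_holomorphic_weight_two_constant_term
    (f : ℂ → ℂ)
    (hol : DifferentiableOn ℂ f {τ : ℂ | 0 < τ.im})
    (htrans : ∀ a b c d : ℤ, a * d - b * c = 1 → ∀ τ : ℂ, 0 < τ.im →
      f (((a : ℂ) * τ + b) / ((c : ℂ) * τ + d)) = ((c : ℂ) * τ + d) ^ 2 * f τ)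
    (N : ℕ) (coef : ℤ → ℂ)
    (hcut : ∀ n : ℤ, n < -(N : ℤ) → coef n = 0)
    (hsum : ∀ τ : ℂ, 0 < τ.im →
      Summable (fun n : ℤ =>
        coef n * Complex.exp (2 * (Real.pi : ℂ) * Complex.I * (n : ℂ) * τ)))
    (hexp : ∀ τ : ℂ, 0 < τ.im →
      f τ = ∑' n : ℤ, coef n * Complex.exp (2 * (Real.pi : ℂ) * Complex.I * (n : ℂ) * τ)) :
    coef 0 = 0 := by
  -- the primitive F of f
  have hF : ∀ z : ℂ, 0 < z.im → HasDerivAt (auxF coef) (f z) z :=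
    auxF_hasDerivAt f coef hsum hexp
  -- the S-transformation law
  have hS : ∀ z : ℂ, 0 < z.im → f (-1 / z) = z ^ 2 * f z := by
    intro z hz
    have := htrans 0 (-1) 1 0 (by norm_num) z hz
    norm_num at this
    convert this using 2
  -- H = F(-1/z) - F(z) has zero derivative on the upper half-plane
  set U : Set ℂ := {w : ℂ | 0 < w.im} with hU_def
  have hUopen : IsOpen U := isOpen_lt continuous_const Complex.continuous_im
  have hUconv : Convex ℝ U := convex_halfSpace_im_gt 0
  set H : ℂ → ℂ := fun z => auxF coef (-1 / z) - auxF coef z with hH_def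
  have himinv : ∀ z : ℂ, 0 < z.im → 0 < (-1 / z).im := by
    intro z hz
    have hz0 : z ≠ 0 := by intro h; rw [h] at hz; simp at hz
    rw [neg_div, one_div, Complex.neg_im, Complex.inv_im, neg_div, neg_neg]
    have := Complex.normSq_pos.mpr hz0
    positivity
  have hH' : ∀ z ∈ U, HasDerivAt H 0 z := by
    intro z hz
    have hz : 0 < z.im := hz
    have hz0 : z ≠ 0 := by intro h; rw [h] at hz; simp at hz
    have hinner : HasDerivAt (fun y : ℂ => -1 / y) ((z ^ 2)⁻¹) z := by
      have h1 := (hasDerivAt_inv hz0).neg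
      have hfun : (fun y : ℂ => -1 / y) = fun y : ℂ => -(y⁻¹) :=
        funext fun y => by rw [neg_div, one_div]
      rw [hfun]
      simpa [Pi.neg_def] using h1
    have houter := hF (-1 / z) (himinv z hz)
    have hcomp := HasDerivAt.comp z houter hinner
    have hsub := hcomp.sub (hF z hz)
    have hval : f (-1 / z) * (z ^ 2)⁻¹ - f z = 0 := by
      rw [hS z hz]
      field_simp
      ring
    rw [hval] at hsub
    exact hsub
  -- hence H is constant on U, with value H(i) = 0
  have hHdiff : DifferentiableOn ℂ H U := fun w hw =>
    (hH' w hw).differentiableAt.differentiableWithinAt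
  have hbound : ∀ w ∈ U, ‖fderivWithin ℂ H U w‖ ≤ 0 := by
    intro w hw
    have hfd := (hH' w hw).hasFDerivAt
    have heq : fderivWithin ℂ H U w = ContinuousLinearMap.smulRight (1 : ℂ →L[ℂ] ℂ) (0 : ℂ) :=
      hfd.hasFDerivWithinAt.fderivWithin (hUopen.uniqueDiffWithinAt hw)
    rw [heq]
    simp
  have hImem : Complex.I ∈ U := by simp [hU_def]
  have hHI : H Complex.I = 0 := by
    have : (-1 / Complex.I) = Complex.I := by simp
    simp [hH_def, this]
  have hconst : ∀ z ∈ U, H z = 0 := by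
    intro z hz
    have := hUconv.norm_image_sub_le_of_norm_fderivWithin_le hHdiff hbound hImem hz
    rw [hHI] at this
    simpa [sub_eq_zero] using (norm_le_zero_iff.mp (by simpa using this))
  -- evaluate at ρ = (-1 + √3 i)/2
  set ρ : ℂ := (-1 / 2 : ℂ) + ((Real.sqrt 3 / 2 : ℝ) : ℂ) * Complex.I with hρ_def
  have hρim : ρ.im = Real.sqrt 3 / 2 := by simp [hρ_def]
  have hρpos : 0 < ρ.im := by
    rw [hρim]
    positivity
  have hρ0 : ρ ≠ 0 := by
    intro h
    rw [h] at hρpos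
    simp at hρpos
  have hρmul : (ρ + 1) * ρ = -1 := by
    have h3 : ((Real.sqrt 3 : ℝ) : ℂ) ^ 2 = 3 := by
      rw [← Complex.ofReal_pow, Real.sq_sqrt (by norm_num : (0 : ℝ) ≤ 3)]; norm_num
    rw [hρ_def]
    push_cast
    linear_combination (3 / 4 : ℂ) * Complex.I_sq + (Complex.I ^ 2 / 4) * h3
  have hρinv : -1 / ρ = ρ + 1 := by
    rw [div_eq_iff hρ0, hρmul]
  have h1 := hconst ρ hρpos
  rw [hH_def] at h1
  simp only at h1
  rw [hρinv] at h1
  have h2 := auxF_period coef ρ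
  have h3 : auxF coef (ρ + 1) = auxF coef ρ := by
    have := sub_eq_zero.mp h1
    exact this
  rw [h3] at h2
  linear_combination -h2
end
end

section
/- Let Γ = SU_{2,2}(ℤ[i]) and let U_{2,2}(ℤ[i]) be the group of all M ∈ GL_4(ℂ) with entries in ℤ[i] satisfying Mᵀ 𝐉 M̄ = 𝐉. Set ℍ2 = {z ∈ H2 : zᵀ = z} (the Siegel upper half-space) and T = {z = [[τ, z1],[z2, w]] ∈ H2 : z1 = −z2}. Then: (a) there exists M ∈ U_{2,2}(ℤ[i]) with M·ℍ2 = T; and (b) there exists no γ ∈ Γ with γ·ℍ2 = T. (Thus ℍ2 and T represent two distinct Γ-orbits of discriminant-1/4 divisors, which coincide under the full Hermitian modular group U_{2,2}(ℤ[i]).) -/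
noncomputable section

open Matrix Complex

/-- Membership in the ring of Gaussian integers `ℤ[i] ⊆ ℂ`. -/
def InZi (x : ℂ) : Prop := ∃ a b : ℤ, x = (a : ℂ) + (b : ℂ) * Complex.I

/-- The full Hermitian modular group `U_{2,2}(ℤ[i])`. -/
def U22Zi : Set Mat4 := {M | (∀ i j, InZi (M i j)) ∧ IsUnitaryRel M}

/-- The group `SU_{2,2}(ℤ[i])`. -/
def SU22Zi : Set Mat4 := {M | M ∈ U22Zi ∧ M.det = 1}


namespace TwoOrbitsAux

open Matrix Complex

/-! ### Generic helpers -/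

lemma zero_not_mem_HermHalf : (0 : Mat2) ∉ HermHalf := by
  rintro ⟨-, hpos⟩
  have h := hpos ![1, 0] (by
    intro h
    have := congrFun h 0
    simp at this)
  simp at h

lemma L1 (C X : Mat2) : (Cᵀ*X*C) 0 1 - (Cᵀ*X*C) 1 0 = C.det * (X 0 1 - X 1 0) := by
  simp [Matrix.mul_apply, Matrix.det_fin_two, Fin.sum_univ_two]; ring

lemma h2I : ((2:ℂ)*Complex.I) ≠ 0 := by simp [Complex.I_ne_zero]

lemma pt_mem_Siegel (t s x : ℝ) (ht : 0 < t) (hs : 0 < s) :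
    !![(t:ℂ)*Complex.I, (x:ℂ); (x:ℂ), (s:ℂ)*Complex.I] ∈ Siegel := by
  set z : Mat2 := !![(t:ℂ)*Complex.I, (x:ℂ); (x:ℂ), (s:ℂ)*Complex.I] with hz
  have hY : ((2 : ℂ) * Complex.I)⁻¹ • (z - z.conjTranspose) = !![(t:ℂ), 0; 0, (s:ℂ)] := by
    rw [inv_smul_eq_iff₀ h2I]
    ext i j
    fin_cases i <;> fin_cases j <;>
      simp [hz, conjTranspose_apply, Complex.conj_ofReal, Complex.conj_I] <;> ring
  refine ⟨⟨?_, ?_⟩, ?_⟩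
  · rw [hY]
    ext i j
    fin_cases i <;> fin_cases j <;>
      simp [conjTranspose_apply, Complex.conj_ofReal]
  · intro v hv
    rw [hY]
    have hexp : (dotProduct (star v) ((!![(t:ℂ), 0; 0, (s:ℂ)]).mulVec v)).re
        = t * Complex.normSq (v 0) + s * Complex.normSq (v 1) := by
      simp [dotProduct, Matrix.mulVec, Fin.sum_univ_two, Complex.normSq_apply,
        Complex.mul_re, Complex.add_re, Complex.mul_im]
      ring
    rw [hexp]
    rcases Function.ne_iff.mp hv with ⟨i, hi⟩
    fin_cases i
    · have h1 : 0 < t * Complex.normSq (v 0) := mul_pos ht (Complex.normSq_pos.2 hi)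
      have h2 : 0 ≤ s * Complex.normSq (v 1) := mul_nonneg hs.le (Complex.normSq_nonneg _)
      linarith
    · have h1 : 0 ≤ t * Complex.normSq (v 0) := mul_nonneg ht.le (Complex.normSq_nonneg _)
      have h2 : 0 < s * Complex.normSq (v 1) := mul_pos hs (Complex.normSq_pos.2 hi)
      linarith
  · ext i j
    fin_cases i <;> fin_cases j <;> simp [hz]

lemma conj_diag_mem (p : ℂ) (hp : p * (starRingEnd ℂ) p = 1) (z : Mat2) (hz : z ∈ HermHalf) :
    !![z 0 0, p * z 0 1; (starRingEnd ℂ) p * z 1 0, z 1 1] ∈ HermHalf := by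
  obtain ⟨hherm, hpos⟩ := hz
  set Y : Mat2 := ((2 : ℂ) * Complex.I)⁻¹ • (z - z.conjTranspose) with hYdef
  set w : Mat2 := !![z 0 0, p * z 0 1; (starRingEnd ℂ) p * z 1 0, z 1 1] with hw
  have hq : (starRingEnd ℂ) p ≠ 0 := by
    intro h; rw [h, mul_zero] at hp; exact zero_ne_one hp
  have hp0 : p ≠ 0 := by
    intro h; rw [h, zero_mul] at hp; exact zero_ne_one hp
  have hYw : ((2 : ℂ) * Complex.I)⁻¹ • (w - w.conjTranspose)
      = !![Y 0 0, p * Y 0 1; (starRingEnd ℂ) p * Y 1 0, Y 1 1] := by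
    ext i j
    fin_cases i <;> fin_cases j <;>
      simp [hw, hYdef, conjTranspose_apply, Matrix.sub_apply, Matrix.smul_apply,
        _root_.map_mul, smul_eq_mul] <;> ring
  have hherm' : ∀ i j, (starRingEnd ℂ) (Y j i) = Y i j := by
    intro i j
    have := congrFun (congrFun hherm i) j
    simpa [conjTranspose_apply] using this
  refine ⟨?_, ?_⟩
  · rw [hYw]
    ext i j
    fin_cases i <;> fin_cases j <;>
      simp [conjTranspose_apply, _root_.map_mul, Complex.conj_conj, hherm']
  · intro v hv
    rw [hYw]
    set u : Fin 2 → ℂ := ![(starRingEnd ℂ) p * v 0, v 1] with hu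
    have hune : u ≠ 0 := by
      intro h
      apply hv
      funext i
      fin_cases i
      · have h0 := congrFun h 0
        simp [hu] at h0
        rcases h0 with h0 | h0
        · exact absurd h0 hp0
        · exact h0
      · have h1 := congrFun h 1
        simpa [hu] using h1
    have heq : (dotProduct (star v)
        ((!![Y 0 0, p * Y 0 1; (starRingEnd ℂ) p * Y 1 0, Y 1 1]).mulVec v))
        = dotProduct (star u) (Y.mulVec u) := by
      simp only [hu, dotProduct, Matrix.mulVec, Fin.sum_univ_two, Pi.star_apply,
        Matrix.cons_val', Matrix.cons_val_zero, Matrix.cons_val_one, Matrix.head_cons,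
        Matrix.head_fin_const, Matrix.empty_val', Matrix.cons_val_fin_one, of_apply,
        RCLike.star_def, _root_.map_mul, Complex.conj_conj, dotProduct]
      linear_combination (-((starRingEnd ℂ) (v 0) * Y 0 0 * v 0)) * hp
    rw [heq]
    exact hpos u hune

/-! ### Part (a) -/

def Mgood : Mat4 := !![Complex.I,0,0,0; 0,1,0,0; 0,0,Complex.I,0; 0,0,0,1]
def amat : Mat2 := !![Complex.I,0;0,1]
def abar : Mat2 := !![-Complex.I,0;0,1]

lemma blk00 : blk Mgood 0 0 = amat := by
  ext i j; fin_cases i <;> fin_cases j <;> rfl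
lemma blk01 : blk Mgood 0 1 = 0 := by
  ext i j; fin_cases i <;> fin_cases j <;> rfl
lemma blk10 : blk Mgood 1 0 = 0 := by
  ext i j; fin_cases i <;> fin_cases j <;> rfl
lemma blk11 : blk Mgood 1 1 = amat := by
  ext i j; fin_cases i <;> fin_cases j <;> rfl

lemma amat_abar : amat * abar = 1 := by
  ext i j; fin_cases i <;> fin_cases j <;>
    simp [amat, abar, Matrix.mul_apply, Fin.sum_univ_two, Matrix.one_apply]

lemma amat_inv : amat⁻¹ = abar := Matrix.inv_eq_right_inv amat_abar

lemma moeb_Mgood (z : Mat2) : moeb Mgood z = amat * z * abar := by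
  unfold moeb
  rw [blk00, blk01, blk10, blk11, Matrix.zero_mul, zero_add, add_zero, amat_inv]

lemma moeb_Mgood' (z : Mat2) :
    moeb Mgood z = !![z 0 0, Complex.I * z 0 1; -Complex.I * z 1 0, z 1 1] := by
  rw [moeb_Mgood]
  ext i j
  fin_cases i <;> fin_cases j <;>
    simp [amat, abar, Matrix.mul_apply, Matrix.vecMul, dotProduct,
      Fin.sum_univ_two, Complex.I_mul_I, Matrix.vecHead, Matrix.vecTail] <;> ring_nf <;>
    simp [Complex.I_sq] <;> try ring

lemma Mgood_mem : Mgood ∈ U22Zi := by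
  constructor
  · have h0 : InZi 0 := ⟨0, 0, by norm_num⟩
    have h1 : InZi 1 := ⟨1, 0, by norm_num⟩
    have hI : InZi Complex.I := ⟨0, 1, by norm_num⟩
    intro i j
    fin_cases i <;> fin_cases j <;> first | exact h0 | exact h1 | exact hI
  · unfold IsUnitaryRel
    have hT : Mgoodᵀ = Mgood := by
      ext i j; fin_cases i <;> fin_cases j <;> rfl
    have hmap : Mgood.map (starRingEnd ℂ) =
        !![-Complex.I,0,0,0; 0,1,0,0; 0,0,-Complex.I,0; 0,0,0,1] := by
      ext i j; fin_cases i <;> fin_cases j <;>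
        simp [Mgood, Matrix.map_apply, Complex.conj_I, Matrix.vecHead, Matrix.vecTail]
    rw [hT, hmap]
    ext i j
    fin_cases i <;> fin_cases j <;>
      simp [Mgood, Jmat, Matrix.mul_apply, Fin.sum_univ_four, Complex.I_mul_I,
        Matrix.vecHead, Matrix.vecTail]

lemma partA : moeb Mgood '' Siegel = {z : Mat2 | z ∈ HermHalf ∧ z 0 1 = - z 1 0} := by
  ext w
  simp only [Set.mem_image, Set.mem_setOf_eq]
  constructor
  · rintro ⟨z, ⟨hzH, hzsym⟩, rfl⟩
    rw [moeb_Mgood']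
    have hsym10 : z 1 0 = z 0 1 := by
      have := congrFun (congrFun hzsym 0) 1
      simpa [Matrix.transpose_apply] using this
    constructor
    · have := conj_diag_mem Complex.I (by simp [Complex.conj_I, Complex.I_mul_I]) z hzH
      rwa [Complex.conj_I] at this
    · simp [hsym10]; try ring
  · rintro ⟨hwH, hwskew⟩
    have hw10 : w 1 0 = -w 0 1 := by
      rw [hwskew]; ring
    refine ⟨!![w 0 0, -Complex.I * w 0 1; Complex.I * w 1 0, w 1 1], ⟨?_, ?_⟩, ?_⟩
    · have := conj_diag_mem (-Complex.I)
        (by simp [Complex.conj_I, Complex.I_mul_I]) w hwH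
      have hc : (starRingEnd ℂ) (-Complex.I) = Complex.I := by
        simp [Complex.conj_I]
      rwa [hc] at this
    · ext i j
      fin_cases i <;> fin_cases j <;> simp [hw10] <;> try ring
    · rw [moeb_Mgood']
      ext i j
      fin_cases i <;> fin_cases j <;>
        simp [Complex.I_mul_I] <;> ring_nf <;> simp [Complex.I_sq] <;> try ring

/-! ### Part (b) helpers -/

def eps : Mat2 := !![1,0;0,-1]
def Jeps : Mat4 := !![0,0,-1,0; 0,0,0,1; 1,0,0,0; 0,-1,0,0]

lemma det4 (A : Mat4) : A.det =
    A 0 0*(A 1 1*(A 2 2*A 3 3 - A 2 3*A 3 2) - A 1 2*(A 2 1*A 3 3 - A 2 3*A 3 1) + A 1 3*(A 2 1*A 3 2 - A 2 2*A 3 1))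
  - A 0 1*(A 1 0*(A 2 2*A 3 3 - A 2 3*A 3 2) - A 1 2*(A 2 0*A 3 3 - A 2 3*A 3 0) + A 1 3*(A 2 0*A 3 2 - A 2 2*A 3 0))
  + A 0 2*(A 1 0*(A 2 1*A 3 3 - A 2 3*A 3 1) - A 1 1*(A 2 0*A 3 3 - A 2 3*A 3 0) + A 1 3*(A 2 0*A 3 1 - A 2 1*A 3 0))
  - A 0 3*(A 1 0*(A 2 1*A 3 2 - A 2 2*A 3 1) - A 1 1*(A 2 0*A 3 2 - A 2 2*A 3 0) + A 1 2*(A 2 0*A 3 1 - A 2 1*A 3 0)) := by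
  rw [Matrix.det_succ_row_zero]
  simp [Fin.sum_univ_four, Matrix.det_fin_three, Matrix.submatrix, Fin.succAbove]
  ring

lemma pf_identity (A : Mat4) :
    (Aᵀ*Jeps*A) 0 1 * (Aᵀ*Jeps*A) 2 3 - (Aᵀ*Jeps*A) 0 2 * (Aᵀ*Jeps*A) 1 3
      + (Aᵀ*Jeps*A) 0 3 * (Aᵀ*Jeps*A) 1 2 = A.det := by
  rw [det4]
  simp [Matrix.mul_apply, Fin.sum_univ_four, Jeps, Matrix.vecHead, Matrix.vecTail]
  ring

lemma step (γ : Mat4)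
    (himg : moeb γ '' Siegel = {z : Mat2 | z ∈ HermHalf ∧ z 0 1 = - z 1 0})
    (z : Mat2) (hz : z ∈ Siegel) :
    ((blk γ 1 0 * z + blk γ 1 1)ᵀ * eps * (blk γ 0 0 * z + blk γ 0 1)) 0 1
      - ((blk γ 1 0 * z + blk γ 1 1)ᵀ * eps * (blk γ 0 0 * z + blk γ 0 1)) 1 0 = 0 := by
  have hmem : moeb γ z ∈ {z : Mat2 | z ∈ HermHalf ∧ z 0 1 = - z 1 0} :=
    himg ▸ Set.mem_image_of_mem _ hz
  obtain ⟨hH, hskew⟩ := hmem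
  set C : Mat2 := blk γ 1 0 * z + blk γ 1 1 with hC
  set A : Mat2 := blk γ 0 0 * z + blk γ 0 1 with hA
  have hdet : IsUnit C.det := by
    by_contra hd
    have : moeb γ z = 0 := by
      unfold moeb
      rw [← hC, ← hA, Matrix.nonsing_inv_apply_not_isUnit C hd, Matrix.mul_zero]
    rw [this] at hH
    exact zero_not_mem_HermHalf hH
  have hwC : moeb γ z * C = A := by
    unfold moeb
    rw [← hC, ← hA, Matrix.mul_assoc, Matrix.nonsing_inv_mul C hdet, Matrix.mul_one]
  have key : Cᵀ * eps * A = Cᵀ * (eps * moeb γ z) * C := by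
    rw [Matrix.mul_assoc (Cᵀ) (eps * moeb γ z) C, Matrix.mul_assoc eps (moeb γ z) C, hwC,
      ← Matrix.mul_assoc]
  rw [key, L1]
  have h1 : (eps * moeb γ z) 0 1 = moeb γ z 0 1 := by
    simp [eps, Matrix.mul_apply, Fin.sum_univ_two]
  have h2 : (eps * moeb γ z) 1 0 = - moeb γ z 1 0 := by
    simp [eps, Matrix.mul_apply, Fin.sum_univ_two]
  rw [h1, h2, hskew]
  ring

lemma auxA (g : ℂ) (hg : InZi g) (h : g = Complex.I * (starRingEnd ℂ) g) :
    ∃ x : ℤ, g = (x:ℂ) * (1 + Complex.I) := by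
  obtain ⟨x, y, rfl⟩ := hg
  have hc : (starRingEnd ℂ) ((x:ℂ)+(y:ℂ)*Complex.I) = (x:ℂ) - (y:ℂ)*Complex.I := by
    simp [_root_.map_add, _root_.map_mul, Complex.conj_I]
    ring
  rw [hc] at h
  have h2 : ((x - y : ℤ):ℂ) * (1 - Complex.I) = 0 := by
    push_cast
    linear_combination h - (y:ℂ) * Complex.I_sq
  have h3 : (1 : ℂ) - Complex.I ≠ 0 := by
    intro hh
    have := congrArg Complex.im hh
    simp at this
  have h4 : ((x - y : ℤ):ℂ) = 0 := by
    rcases mul_eq_zero.mp h2 with h | h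
    · exact h
    · exact absurd h h3
  have h5 : x = y := by
    have : (x - y : ℤ) = 0 := by exact_mod_cast h4
    omega
  exact ⟨x, by rw [← h5]; push_cast; ring⟩

lemma auxB (g : ℂ) (hg : InZi g) (h : g = -(Complex.I * (starRingEnd ℂ) g)) :
    ∃ x : ℤ, g = (x:ℂ) * (1 - Complex.I) := by
  obtain ⟨x, y, rfl⟩ := hg
  have hc : (starRingEnd ℂ) ((x:ℂ)+(y:ℂ)*Complex.I) = (x:ℂ) - (y:ℂ)*Complex.I := by
    simp [_root_.map_add, _root_.map_mul, Complex.conj_I]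
    ring
  rw [hc] at h
  have h2 : ((x + y : ℤ):ℂ) * (1 + Complex.I) = 0 := by
    push_cast
    linear_combination h + (y:ℂ) * Complex.I_sq
  have h3 : (1 : ℂ) + Complex.I ≠ 0 := by
    intro hh
    have := congrArg Complex.im hh
    simp at this
  have h4 : ((x + y : ℤ):ℂ) = 0 := by
    rcases mul_eq_zero.mp h2 with h | h
    · exact h
    · exact absurd h h3
  have h5 : y = -x := by
    have : (x + y : ℤ) = 0 := by exact_mod_cast h4
    omega
  exact ⟨x, by rw [h5]; push_cast; ring⟩


set_option maxHeartbeats 3200000 in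
lemma partB :
    ¬ ∃ γ ∈ SU22Zi, moeb γ '' Siegel = {z : Mat2 | z ∈ HermHalf ∧ z 0 1 = - z 1 0} := by
  rintro ⟨γ, ⟨⟨hZi, hU⟩, hdet⟩, himg⟩
  have hba : blk γ 0 0 = !![γ 0 0, γ 0 1; γ 1 0, γ 1 1] := by
    ext i j; fin_cases i <;> fin_cases j <;> rfl
  have hbb : blk γ 0 1 = !![γ 0 2, γ 0 3; γ 1 2, γ 1 3] := by
    ext i j; fin_cases i <;> fin_cases j <;> rfl
  have hbc : blk γ 1 0 = !![γ 2 0, γ 2 1; γ 3 0, γ 3 1] := by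
    ext i j; fin_cases i <;> fin_cases j <;> rfl
  have hbd : blk γ 1 1 = !![γ 2 2, γ 2 3; γ 3 2, γ 3 3] := by
    ext i j; fin_cases i <;> fin_cases j <;> rfl
  have hp1 : (!![Complex.I, 0; 0, Complex.I] : Mat2) ∈ Siegel := by
    have := pt_mem_Siegel 1 1 0 one_pos one_pos; simpa using this
  have hp2 : (!![(2:ℂ)*Complex.I, 0; 0, Complex.I] : Mat2) ∈ Siegel := by
    have := pt_mem_Siegel 2 1 0 two_pos one_pos; simpa using this
  have hp3 : (!![Complex.I, 0; 0, (2:ℂ)*Complex.I] : Mat2) ∈ Siegel := by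
    have := pt_mem_Siegel 1 2 0 one_pos two_pos; simpa using this
  have hp4 : (!![(2:ℂ)*Complex.I, 0; 0, (2:ℂ)*Complex.I] : Mat2) ∈ Siegel := by
    have := pt_mem_Siegel 2 2 0 two_pos two_pos; simpa using this
  have hp5 : (!![Complex.I, 1; 1, Complex.I] : Mat2) ∈ Siegel := by
    have := pt_mem_Siegel 1 1 1 one_pos one_pos; simpa using this
  have E1 := step γ himg _ hp1
  have E2 := step γ himg _ hp2
  have E3 := step γ himg _ hp3
  have E4 := step γ himg _ hp4
  have E5 := step γ himg _ hp5
  rw [hba, hbb, hbc, hbd] at E1 E2 E3 E4 E5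
  simp only [Matrix.mul_apply, Matrix.add_apply, Matrix.transpose_apply, Fin.sum_univ_two,
    eps, Matrix.cons_val', Matrix.cons_val_zero, Matrix.cons_val_one, Matrix.head_cons,
    Matrix.head_fin_const, Matrix.empty_val', Matrix.cons_val_fin_one,
    Matrix.of_apply] at E1 E2 E3 E4 E5
  set ν : ℂ := -((γᵀ * Jeps * γ) 0 2) with hν
  have m00 : (γᵀ * Jeps * γ) 0 0 = ν * Jmat 0 0 := by
    rw [hν]
    simp [Jeps, Jmat, Matrix.mul_apply, Matrix.transpose_apply, Fin.sum_univ_four, Matrix.vecHead, Matrix.vecTail]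
    try ring
  have m01 : (γᵀ * Jeps * γ) 0 1 = ν * Jmat 0 1 := by
    rw [hν]
    simp [Jeps, Jmat, Matrix.mul_apply, Matrix.transpose_apply, Fin.sum_univ_four, Matrix.vecHead, Matrix.vecTail]
    linear_combination (-1:ℂ)*E1 + E2 + E3 - E4 + ((-1)*γ 0 0*γ 2 1 + γ 0 1*γ 2 0 + γ 1 0*γ 3 1 + (-1)*γ 1 1*γ 3 0) * Complex.I_sq
  have m02 : (γᵀ * Jeps * γ) 0 2 = ν * Jmat 0 2 := by
    rw [hν]
    simp [Jeps, Jmat, Matrix.mul_apply, Matrix.transpose_apply, Fin.sum_univ_four, Matrix.vecHead, Matrix.vecTail]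
    try ring
  have m03 : (γᵀ * Jeps * γ) 0 3 = ν * Jmat 0 3 := by
    rw [hν]
    simp [Jeps, Jmat, Matrix.mul_apply, Matrix.transpose_apply, Fin.sum_univ_four, Matrix.vecHead, Matrix.vecTail]
    linear_combination (2*Complex.I)*E1 - (2*Complex.I)*E2 - Complex.I*E3 + Complex.I*E4 + ((-1)*γ 0 0*γ 2 3 + γ 0 3*γ 2 0 + γ 1 0*γ 3 3 + (-1)*γ 1 3*γ 3 0) * Complex.I_sq
  have m10 : (γᵀ * Jeps * γ) 1 0 = ν * Jmat 1 0 := by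
    rw [hν]
    simp [Jeps, Jmat, Matrix.mul_apply, Matrix.transpose_apply, Fin.sum_univ_four, Matrix.vecHead, Matrix.vecTail]
    linear_combination E1 - E2 - E3 + E4 + (γ 0 0*γ 2 1 + (-1)*γ 0 1*γ 2 0 + (-1)*γ 1 0*γ 3 1 + γ 1 1*γ 3 0) * Complex.I_sq
  have m11 : (γᵀ * Jeps * γ) 1 1 = ν * Jmat 1 1 := by
    rw [hν]
    simp [Jeps, Jmat, Matrix.mul_apply, Matrix.transpose_apply, Fin.sum_univ_four, Matrix.vecHead, Matrix.vecTail]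
    try ring
  have m12 : (γᵀ * Jeps * γ) 1 2 = ν * Jmat 1 2 := by
    rw [hν]
    simp [Jeps, Jmat, Matrix.mul_apply, Matrix.transpose_apply, Fin.sum_univ_four, Matrix.vecHead, Matrix.vecTail]
    linear_combination (-2*Complex.I)*E1 + Complex.I*E2 + (2*Complex.I)*E3 - Complex.I*E4 + ((-1)*γ 0 1*γ 2 2 + γ 0 2*γ 2 1 + γ 1 1*γ 3 2 + (-1)*γ 1 2*γ 3 1) * Complex.I_sq
  have m13 : (γᵀ * Jeps * γ) 1 3 = ν * Jmat 1 3 := by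
    rw [hν]
    simp [Jeps, Jmat, Matrix.mul_apply, Matrix.transpose_apply, Fin.sum_univ_four, Matrix.vecHead, Matrix.vecTail]
    linear_combination (-2:ℂ)*E1 + E2 + E3 - E4 + E5 + ((-1)*γ 0 0*γ 2 1 + γ 0 1*γ 2 0 + γ 1 0*γ 3 1 + (-1)*γ 1 1*γ 3 0) * Complex.I_sq
  have m20 : (γᵀ * Jeps * γ) 2 0 = ν * Jmat 2 0 := by
    rw [hν]
    simp [Jeps, Jmat, Matrix.mul_apply, Matrix.transpose_apply, Fin.sum_univ_four, Matrix.vecHead, Matrix.vecTail]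
    try ring
  have m21 : (γᵀ * Jeps * γ) 2 1 = ν * Jmat 2 1 := by
    rw [hν]
    simp [Jeps, Jmat, Matrix.mul_apply, Matrix.transpose_apply, Fin.sum_univ_four, Matrix.vecHead, Matrix.vecTail]
    linear_combination (2*Complex.I)*E1 - Complex.I*E2 - (2*Complex.I)*E3 + Complex.I*E4 + (γ 0 1*γ 2 2 + (-1)*γ 0 2*γ 2 1 + (-1)*γ 1 1*γ 3 2 + γ 1 2*γ 3 1) * Complex.I_sq
  have m22 : (γᵀ * Jeps * γ) 2 2 = ν * Jmat 2 2 := by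
    rw [hν]
    simp [Jeps, Jmat, Matrix.mul_apply, Matrix.transpose_apply, Fin.sum_univ_four, Matrix.vecHead, Matrix.vecTail]
    try ring
  have m23 : (γᵀ * Jeps * γ) 2 3 = ν * Jmat 2 3 := by
    rw [hν]
    simp [Jeps, Jmat, Matrix.mul_apply, Matrix.transpose_apply, Fin.sum_univ_four, Matrix.vecHead, Matrix.vecTail]
    linear_combination (4:ℂ)*E1 - 2*E2 - 2*E3 + E4
  have m30 : (γᵀ * Jeps * γ) 3 0 = ν * Jmat 3 0 := by
    rw [hν]
    simp [Jeps, Jmat, Matrix.mul_apply, Matrix.transpose_apply, Fin.sum_univ_four, Matrix.vecHead, Matrix.vecTail]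
    linear_combination (-2*Complex.I)*E1 + (2*Complex.I)*E2 + Complex.I*E3 - Complex.I*E4 + (γ 0 0*γ 2 3 + (-1)*γ 0 3*γ 2 0 + (-1)*γ 1 0*γ 3 3 + γ 1 3*γ 3 0) * Complex.I_sq
  have m31 : (γᵀ * Jeps * γ) 3 1 = ν * Jmat 3 1 := by
    rw [hν]
    simp [Jeps, Jmat, Matrix.mul_apply, Matrix.transpose_apply, Fin.sum_univ_four, Matrix.vecHead, Matrix.vecTail]
    linear_combination (2:ℂ)*E1 - E2 - E3 + E4 - E5 + (γ 0 0*γ 2 1 + (-1)*γ 0 1*γ 2 0 + (-1)*γ 1 0*γ 3 1 + γ 1 1*γ 3 0) * Complex.I_sq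
  have m32 : (γᵀ * Jeps * γ) 3 2 = ν * Jmat 3 2 := by
    rw [hν]
    simp [Jeps, Jmat, Matrix.mul_apply, Matrix.transpose_apply, Fin.sum_univ_four, Matrix.vecHead, Matrix.vecTail]
    linear_combination (-4:ℂ)*E1 + 2*E2 + 2*E3 - E4
  have m33 : (γᵀ * Jeps * γ) 3 3 = ν * Jmat 3 3 := by
    rw [hν]
    simp [Jeps, Jmat, Matrix.mul_apply, Matrix.transpose_apply, Fin.sum_univ_four, Matrix.vecHead, Matrix.vecTail]
    try ring
  have main : γᵀ * Jeps * γ = ν • Jmat := by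
    ext i j
    simp only [Matrix.smul_apply, smul_eq_mul]
    fin_cases i <;> fin_cases j <;>
      first | exact m00 | exact m01 | exact m02 | exact m03 | exact m10 | exact m11 | exact m12 | exact m13 | exact m20 | exact m21 | exact m22 | exact m23 | exact m30 | exact m31 | exact m32 | exact m33
  have hdetT : IsUnit (γᵀ.det) := by
    rw [Matrix.det_transpose, hdet]; exact isUnit_one
  have hchain : γᵀ * (Jeps * γ) = γᵀ * (ν • (Jmat * γ.map (starRingEnd ℂ))) := by
    calc γᵀ * (Jeps * γ) = γᵀ * Jeps * γ := by rw [Matrix.mul_assoc]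
      _ = ν • Jmat := main
      _ = ν • (γᵀ * Jmat * γ.map (starRingEnd ℂ)) := by rw [hU]
      _ = γᵀ * (ν • (Jmat * γ.map (starRingEnd ℂ))) := by
          rw [Matrix.mul_smul, Matrix.mul_assoc]
  have cancel : Jeps * γ = ν • (Jmat * γ.map (starRingEnd ℂ)) := by
    have h := congrArg (fun X => (γᵀ)⁻¹ * X) hchain
    simpa [← Matrix.mul_assoc, Matrix.nonsing_inv_mul _ hdetT] using h
  have cancelE : ∀ j k : Fin 4, (Jeps * γ) j k
      = ν * ((Jmat * γ.map (starRingEnd ℂ)) j k) := by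
    intro j k
    rw [cancel]
    simp
  -- entrywise relations
  have rel0 : ∀ k : Fin 4, γ 0 k = ν * (starRingEnd ℂ) (γ 0 k) := by
    intro k
    have t := cancelE 2 k
    simp [Jeps, Jmat, Matrix.mul_apply, Fin.sum_univ_four, Matrix.map_apply,
      Matrix.vecHead, Matrix.vecTail] at t
    first | linear_combination t | linear_combination -t
  have rel2 : ∀ k : Fin 4, γ 2 k = ν * (starRingEnd ℂ) (γ 2 k) := by
    intro k
    have t := cancelE 0 k
    simp [Jeps, Jmat, Matrix.mul_apply, Fin.sum_univ_four, Matrix.map_apply,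
      Matrix.vecHead, Matrix.vecTail] at t
    first | linear_combination t | linear_combination -t
  have rel1 : ∀ k : Fin 4, γ 1 k = -(ν * (starRingEnd ℂ) (γ 1 k)) := by
    intro k
    have t := cancelE 3 k
    simp [Jeps, Jmat, Matrix.mul_apply, Fin.sum_univ_four, Matrix.map_apply,
      Matrix.vecHead, Matrix.vecTail] at t
    first | linear_combination t | linear_combination -t
  have rel3 : ∀ k : Fin 4, γ 3 k = -(ν * (starRingEnd ℂ) (γ 3 k)) := by
    intro k
    have t := cancelE 1 k
    simp [Jeps, Jmat, Matrix.mul_apply, Fin.sum_univ_four, Matrix.map_apply,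
      Matrix.vecHead, Matrix.vecTail] at t
    first | linear_combination t | linear_combination -t
  -- Pfaffian: ν² = -1
  have hpf := pf_identity γ
  rw [main, hdet] at hpf
  simp [Jmat, Matrix.smul_apply, Matrix.vecHead, Matrix.vecTail] at hpf
  have hnu2 : ν^2 = -1 := by linear_combination -hpf
  have hcases : ν = Complex.I ∨ ν = -Complex.I := by
    have hfac : (ν - Complex.I) * (ν + Complex.I) = 0 := by
      linear_combination hnu2 - Complex.I_sq
    rcases mul_eq_zero.mp hfac with h | h
    · left; linear_combination h
    · right; linear_combination h
  have h20 := congrFun (congrFun main 2) 0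
  simp only [Matrix.smul_apply, smul_eq_mul] at h20
  simp [Jeps, Jmat, Matrix.mul_apply, Matrix.transpose_apply, Fin.sum_univ_four,
    Matrix.vecHead, Matrix.vecTail] at h20
  rcases hcases with hv | hv
  · -- ν = I
    obtain ⟨x00, hx00⟩ := auxA _ (hZi 0 0) (by rw [← hv]; exact rel0 0)
    obtain ⟨x02, hx02⟩ := auxA _ (hZi 0 2) (by rw [← hv]; exact rel0 2)
    obtain ⟨x20, hx20⟩ := auxA _ (hZi 2 0) (by rw [← hv]; exact rel2 0)
    obtain ⟨x22, hx22⟩ := auxA _ (hZi 2 2) (by rw [← hv]; exact rel2 2)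
    obtain ⟨x10, hx10⟩ := auxB _ (hZi 1 0) (by rw [← hv]; exact rel1 0)
    obtain ⟨x12, hx12⟩ := auxB _ (hZi 1 2) (by rw [← hv]; exact rel1 2)
    obtain ⟨x30, hx30⟩ := auxB _ (hZi 3 0) (by rw [← hv]; exact rel3 0)
    obtain ⟨x32, hx32⟩ := auxB _ (hZi 3 2) (by rw [← hv]; exact rel3 2)
    rw [hv, hx00, hx02, hx20, hx22, hx10, hx12, hx30, hx32] at h20
    have hfin : ((2*(x22*x00 + x32*x10 - x02*x20 - x12*x30) - 1 : ℤ) : ℂ) * Complex.I = 0 := by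
      push_cast
      linear_combination h20 - ((x22:ℂ)*(x00:ℂ) - (x02:ℂ)*(x20:ℂ) + (x12:ℂ)*(x30:ℂ)
        - (x32:ℂ)*(x10:ℂ)) * Complex.I_sq
    rcases mul_eq_zero.mp hfin with h | h
    · have : (2*(x22*x00 + x32*x10 - x02*x20 - x12*x30) - 1 : ℤ) = 0 := by exact_mod_cast h
      omega
    · exact Complex.I_ne_zero h
  · -- ν = -I
    obtain ⟨x00, hx00⟩ := auxB _ (hZi 0 0) (by have := rel0 0; rw [hv] at this; linear_combination this)
    obtain ⟨x02, hx02⟩ := auxB _ (hZi 0 2) (by have := rel0 2; rw [hv] at this; linear_combination this)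
    obtain ⟨x20, hx20⟩ := auxB _ (hZi 2 0) (by have := rel2 0; rw [hv] at this; linear_combination this)
    obtain ⟨x22, hx22⟩ := auxB _ (hZi 2 2) (by have := rel2 2; rw [hv] at this; linear_combination this)
    obtain ⟨x10, hx10⟩ := auxA _ (hZi 1 0) (by have := rel1 0; rw [hv] at this; linear_combination this)
    obtain ⟨x12, hx12⟩ := auxA _ (hZi 1 2) (by have := rel1 2; rw [hv] at this; linear_combination this)
    obtain ⟨x30, hx30⟩ := auxA _ (hZi 3 0) (by have := rel3 0; rw [hv] at this; linear_combination this)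
    obtain ⟨x32, hx32⟩ := auxA _ (hZi 3 2) (by have := rel3 2; rw [hv] at this; linear_combination this)
    rw [hv, hx00, hx02, hx20, hx22, hx10, hx12, hx30, hx32] at h20
    have hfin : ((2*(x02*x20 + x12*x30 - x22*x00 - x32*x10) + 1 : ℤ) : ℂ) * Complex.I = 0 := by
      push_cast
      linear_combination h20 - ((x22:ℂ)*(x00:ℂ) - (x02:ℂ)*(x20:ℂ) + (x12:ℂ)*(x30:ℂ)
        - (x32:ℂ)*(x10:ℂ)) * Complex.I_sq
    rcases mul_eq_zero.mp hfin with h | h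
    · have : (2*(x02*x20 + x12*x30 - x22*x00 - x32*x10) + 1 : ℤ) = 0 := by exact_mod_cast h
      omega
    · exact Complex.I_ne_zero h

end TwoOrbitsAux

/-- the Siegel upper half-space `ℍ₂` and
`T = {z ∈ H2 : z₁ = -z₂}` lie in the same orbit under `U_{2,2}(ℤ[i])` but in
distinct orbits under `SU_{2,2}(ℤ[i])`. -/
theorem two_orbits_of_discriminant_quarter_divisors :
    (∃ M ∈ U22Zi, moeb M '' Siegel = {z : Mat2 | z ∈ HermHalf ∧ z 0 1 = - z 1 0}) ∧
    ¬ ∃ γ ∈ SU22Zi, moeb γ '' Siegel = {z : Mat2 | z ∈ HermHalf ∧ z 0 1 = - z 1 0} := by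
  exact ⟨⟨TwoOrbitsAux.Mgood, TwoOrbitsAux.Mgood_mem, TwoOrbitsAux.partA⟩, TwoOrbitsAux.partB⟩
end
end
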